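/- Let R be a left small ring, let E be a nonzero injective left R-module, and let λ be the cardinality of some generating set of E. Then every independent family of nonzero submodules of a finitely generated torsionfree left R-module M has cardinality strictly less than λ. In particular, if λ = ℵ₀, then every finitely generated torsionfree left R-module has finite Goldie (uniform) dimension, i.e. admits no infinite independent family of nonzero submodules. -/

import Mathlib

universe u

/-- A left `R`-module `K` is a *small module* if there exist a left `R`-module `L` and an
injective `R`-linear map `f : K → L` whose image is a superfluous submodule of `L`. -/
def IsSmallModule (R : Type u) [Ring R] (K : Type u) [AddCommGroup K] [Module R K] : Prop :=
  ∃ (L : Type u) (_ : AddCommGroup L) (_ : Module R L) (f : K →ₗ[R] L),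
    Function.Injective f ∧
      ∀ X : Submodule R L, LinearMap.range f ⊔ X = ⊤ → X = ⊤

section Aux

variable {R : Type u} [Ring R]

/-- A quotient (surjective image) of a small module is small. -/
lemma IsSmallModule.of_surjective {K K' : Type u} [AddCommGroup K] [Module R K]
    [AddCommGroup K'] [Module R K'] (hK : IsSmallModule R K) (π : K →ₗ[R] K')
    (hπ : Function.Surjective π) : IsSmallModule R K' := by
  obtain ⟨L, _, _, f, hf, hsup⟩ := hK
  set W : Submodule R L := (LinearMap.ker π).map f with hW
  have hker : LinearMap.ker π ≤ LinearMap.ker (W.mkQ ∘ₗ f) := by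
    intro k hk
    simp only [LinearMap.mem_ker, LinearMap.coe_comp, Function.comp_apply,
      Submodule.mkQ_apply, Submodule.Quotient.mk_eq_zero]
    exact Submodule.mem_map_of_mem hk
  let g : (K ⧸ LinearMap.ker π) →ₗ[R] (L ⧸ W) := (LinearMap.ker π).liftQ (W.mkQ ∘ₗ f) hker
  let e : (K ⧸ LinearMap.ker π) ≃ₗ[R] K' := π.quotKerEquivOfSurjective hπ
  let f' : K' →ₗ[R] (L ⧸ W) := g ∘ₗ (e.symm : K' →ₗ[R] K ⧸ LinearMap.ker π)
  have hcomm : ∀ k : K, f' (π k) = W.mkQ (f k) := by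
    intro k
    have h1 : e (Submodule.Quotient.mk k) = π k := rfl
    have h2 : e.symm (π k) = Submodule.Quotient.mk k := by
      rw [← h1, LinearEquiv.symm_apply_apply]
    show g (e.symm (π k)) = W.mkQ (f k)
    rw [h2]
    rfl
  refine ⟨L ⧸ W, inferInstance, inferInstance, f', ?_, ?_⟩
  · -- injectivity
    intro a b hab
    obtain ⟨ka, rfl⟩ := hπ a
    obtain ⟨kb, rfl⟩ := hπ b
    rw [hcomm, hcomm] at hab
    have : f (ka - kb) ∈ W := by
      rw [← Submodule.Quotient.mk_eq_zero]
      show W.mkQ (f (ka - kb)) = 0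
      rw [map_sub]
      simpa [sub_eq_zero] using hab
    obtain ⟨k₀, hk₀, hfk₀⟩ := this
    have : k₀ = ka - kb := hf hfk₀
    have hmem : ka - kb ∈ LinearMap.ker π := this ▸ hk₀
    have : π (ka - kb) = 0 := hmem
    rw [map_sub, sub_eq_zero] at this
    exact this
  · -- superfluous
    intro X' hX'
    set X : Submodule R L := X'.comap W.mkQ with hX
    have hfX : LinearMap.range f ⊔ X = ⊤ := by
      rw [eq_top_iff]
      intro l _
      have hl : W.mkQ l ∈ LinearMap.range f' ⊔ X' := hX'.ge Submodule.mem_top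
      obtain ⟨a, ⟨k', hk'⟩, x, hx, hax⟩ := Submodule.mem_sup.mp hl
      obtain ⟨k, rfl⟩ := hπ k'
      rw [hcomm] at hk'
      have hx' : W.mkQ (l - f k) ∈ X' := by
        rw [map_sub, hk']
        rw [← hax]; simpa using hx
      exact Submodule.mem_sup.mpr ⟨f k, ⟨k, rfl⟩, l - f k, hx', by abel⟩
    have hXtop : X = ⊤ := hsup X hfX
    rw [eq_top_iff]
    intro y _
    obtain ⟨l, rfl⟩ := Submodule.mkQ_surjective W y
    have hlX : l ∈ X := hXtop.ge Submodule.mem_top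
    exact hlX

/-- A finite power of a small module is small. -/
lemma IsSmallModule.pi {K : Type u} [AddCommGroup K] [Module R K]
    (hK : IsSmallModule R K) (k : ℕ) : IsSmallModule R (Fin k → K) := by
  classical
  obtain ⟨L, _, _, f, hf, hsup⟩ := hK
  let F : (Fin k → K) →ₗ[R] (Fin k → L) := LinearMap.pi fun i => f ∘ₗ LinearMap.proj i
  have hFinj : Function.Injective F := by
    intro a b hab
    funext i
    exact hf (congrFun hab i)
  -- the superfluous predicate
  let Sf : Submodule R (Fin k → L) → Prop := fun A => ∀ X, A ⊔ X = ⊤ → X = ⊤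
  have hSf_bot : Sf ⊥ := fun X hX => by simpa using hX
  have hSf_sup : ∀ A B, Sf A → Sf B → Sf (A ⊔ B) := by
    intro A B hA hB X hX
    refine hB X (hA (B ⊔ X) ?_)
    rw [← sup_assoc]; exact hX
  have hSf_mono : ∀ A B, A ≤ B → Sf B → Sf A := by
    intro A B hAB hB X hX
    refine hB X ?_
    rw [eq_top_iff, ← hX]
    exact sup_le_sup_right hAB X
  -- each coordinate copy is superfluous
  have hcoord : ∀ i : Fin k,
      Sf ((LinearMap.range f).map (LinearMap.single R (fun _ : Fin k => L) i)) := by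
    intro i X hX
    set Y : Submodule R L := X.comap (LinearMap.single R (fun _ : Fin k => L) i) with hY
    have hfY : LinearMap.range f ⊔ Y = ⊤ := by
      rw [eq_top_iff]
      intro l _
      have hl : Pi.single i l ∈
          (LinearMap.range f).map (LinearMap.single R (fun _ : Fin k => L) i) ⊔ X :=
        hX.ge Submodule.mem_top
      obtain ⟨a, ⟨a₀, ⟨r, rfl⟩, rfl⟩, x, hx, hax⟩ := Submodule.mem_sup.mp hl
      have hsub : (LinearMap.single R (fun _ : Fin k => L) i) (l - f r) ∈ X := by
        rw [map_sub]
        have : (LinearMap.single R (fun _ : Fin k => L) i) l = Pi.single i l := rfl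
        rw [this, ← hax]
        simpa using hx
      exact Submodule.mem_sup.mpr ⟨f r, ⟨r, rfl⟩, l - f r, hsub, by abel⟩
    have hYtop : Y = ⊤ := hsup Y hfY
    have hrange : ∀ l : L, (LinearMap.single R (fun _ : Fin k => L) i) l ∈ X := fun l =>
      (hY ▸ hYtop ▸ (Submodule.mem_top : l ∈ ⊤) : l ∈ X.comap _)
    rw [eq_top_iff, ← hX]
    refine sup_le ?_ le_rfl
    rintro _ ⟨a₀, _, rfl⟩
    exact hrange a₀
  have hSup : Sf (⨆ i : Fin k,
      (LinearMap.range f).map (LinearMap.single R (fun _ : Fin k => L) i)) := by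
    have := Finset.sup_induction (s := (Finset.univ : Finset (Fin k)))
      (f := fun i => (LinearMap.range f).map (LinearMap.single R (fun _ : Fin k => L) i))
      (p := Sf) hSf_bot (fun a ha b hb => hSf_sup a b ha hb) (fun i _ => hcoord i)
    rwa [Finset.sup_univ_eq_iSup] at this
  have hrangeF : LinearMap.range F ≤ ⨆ i : Fin k,
      (LinearMap.range f).map (LinearMap.single R (fun _ : Fin k => L) i) := by
    rintro _ ⟨r, rfl⟩
    have hFr : F r = ∑ i : Fin k, Pi.single i (f (r i)) := by
      have := Finset.univ_sum_single (F r)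
      rw [← this]
      rfl
    rw [hFr]
    refine Submodule.sum_mem _ fun i _ => ?_
    exact Submodule.mem_iSup_of_mem i
      ⟨f (r i), ⟨r i, rfl⟩, rfl⟩
  exact ⟨Fin k → L, inferInstance, inferInstance, F, hFinj,
    fun X hX => hSup X (eq_top_iff.mpr (hX.ge.trans (sup_le_sup_right hrangeF X)))⟩

/-- A nonzero injective module is not small. -/
lemma IsSmallModule.not_injective {E : Type u} [AddCommGroup E] [Module R E] [Nontrivial E]
    (hE : Module.Injective R E) (h : IsSmallModule R E) : False := by
  obtain ⟨L, _, _, f, hf, hsup⟩ := h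
  obtain ⟨h', hh'⟩ := hE.out f hf LinearMap.id
  have hX : LinearMap.range f ⊔ LinearMap.ker h' = ⊤ := by
    rw [eq_top_iff]
    intro l _
    refine Submodule.mem_sup.mpr ⟨f (h' l), ⟨h' l, rfl⟩, l - f (h' l), ?_, by abel⟩
    rw [LinearMap.mem_ker, map_sub, hh']
    simp
  have hker : LinearMap.ker h' = ⊤ := hsup _ hX
  obtain ⟨e, he⟩ := exists_ne (0 : E)
  have : h' (f e) = 0 := by
    have : f e ∈ LinearMap.ker h' := hker ▸ Submodule.mem_top
    exact this
  rw [hh'] at this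
  exact he this

end Aux

/-- Let `R` be a left small ring, `E` a nonzero injective left `R`-module and `λ = #s` the
cardinality of a generating set `s` of `E`.  Then every independent family of nonzero submodules
of a finitely generated torsionfree left `R`-module `M` has cardinality `< λ`; in particular, if
`λ = ℵ₀` then every finitely generated torsionfree left `R`-module has no infinite independent
family of nonzero submodules. -/
theorem stmt_5 (R : Type u) [Ring R] (hR : IsSmallModule R R)
    (E : Type u) [AddCommGroup E] [Module R E] [Nontrivial E] (hE : Module.Injective R E)
    (s : Set E) (hs : Submodule.span R s = ⊤) :
    (∀ (M : Type u) [AddCommGroup M] [Module R M], Module.Finite R M →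
      (∀ (r : R) (m : M), r ≠ 0 → m ≠ 0 → r • m ≠ 0) →
      ∀ (ι : Type u) (N : ι → Submodule R M), iSupIndep N → (∀ i, N i ≠ ⊥) →
        Cardinal.mk ι < Cardinal.mk s) ∧
    (Cardinal.mk s = Cardinal.aleph0 →
      ∀ (M : Type u) [AddCommGroup M] [Module R M], Module.Finite R M →
      (∀ (r : R) (m : M), r ≠ 0 → m ≠ 0 → r • m ≠ 0) →
      ∀ (ι : Type u) (N : ι → Submodule R M), iSupIndep N → (∀ i, N i ≠ ⊥) →
        Finite ι) := by
  classical
  have main : ∀ (M : Type u) [AddCommGroup M] [Module R M], Module.Finite R M →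
      (∀ (r : R) (m : M), r ≠ 0 → m ≠ 0 → r • m ≠ 0) →
      ∀ (ι : Type u) (N : ι → Submodule R M), iSupIndep N → (∀ i, N i ≠ ⊥) →
        Cardinal.mk ι < Cardinal.mk s := by
    intro M _ _ hMfin hMtf ι N hind hne
    by_contra hlt
    push_neg at hlt
    obtain ⟨g⟩ := Cardinal.le_def _ _ |>.mp hlt
    -- choose nonzero elements in each `N i`
    have hn : ∀ i, ∃ x ∈ N i, x ≠ 0 := fun i => by
      obtain ⟨x, hx, hx0⟩ := (Submodule.ne_bot_iff _).mp (hne i)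
      exact ⟨x, hx, hx0⟩
    choose n hnmem hn0 using hn
    haveI : NoZeroSMulDivisors R M := ⟨fun {r m} h => by
      by_contra hc
      push_neg at hc
      exact hMtf r m hc.1 hc.2 h⟩
    have hli : LinearIndependent R n := Ideal.iSupIndep.linearIndependent'
      (hind.mono fun i => (Submodule.span_singleton_le_iff_mem _ _).mpr (hnmem i))
      (fun i => by
        ext r
        simp only [Ideal.mem_torsionOf_iff, Submodule.mem_bot]
        exact ⟨fun h => by by_contra hr; exact hMtf r (n i) hr (hn0 i) h, fun h => by simp [h]⟩)
    have hψinj : Function.Injective (Finsupp.linearCombination R n) :=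
      hli
    -- the target map to E
    let e : ι → E := fun i => if h : ∃ x : s, g x = i then (h.choose : E) else 0
    have hge : ∀ x : s, e (g x) = (x : E) := by
      intro x
      have hex : ∃ y : s, g y = g x := ⟨x, rfl⟩
      have : hex.choose = x := g.injective hex.choose_spec
      simp only [e, dif_pos hex, this]
    obtain ⟨Φ, hΦ⟩ := hE.out (Finsupp.linearCombination R n) hψinj
      (Finsupp.linearCombination R e)
    -- Φ is surjective
    have hΦsurj : Function.Surjective Φ := by
      rw [← LinearMap.range_eq_top, eq_top_iff, ← hs, Submodule.span_le]
      intro x hx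
      refine ⟨Finsupp.linearCombination R n (Finsupp.single (g ⟨x, hx⟩) 1), ?_⟩
      rw [hΦ, Finsupp.linearCombination_single, one_smul, hge]
    haveI : Module.Finite R E := Module.Finite.of_surjective Φ hΦsurj
    obtain ⟨k, F, hF⟩ := Module.Finite.exists_fin' R E
    exact IsSmallModule.not_injective hE ((hR.pi k).of_surjective F hF)
  refine ⟨main, fun hs0 M _ _ hMfin hMtf ι N hind hne => ?_⟩
  have := main M hMfin hMtf ι N hind hne
  rw [hs0] at this
  exact Cardinal.lt_aleph0_iff_finite.mp this
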